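/- Let V and V' be vector spaces over k, equipped respectively with a multilinear form ω (of arity m) and a multilinear form ω' (of arity n). Equip V ⊕ V' with the pair of forms obtained by pulling back ω along the projection to V and ω' along the projection to V'. If every finite-dimensional space with an m-form embeds into (V, ω) and every finite-dimensional space with an n-form embeds into (V', ω'), then every finite-dimensional space equipped with a pair consisting of an m-form and an n-form embeds into V ⊕ V' with its pair of forms. -/
import Mathlib


/-- if `(V, ω)` is a universal space for `m`-forms and `(V', ω')` is a
universal space for `n`-forms, then `V ⊕ V'` with the pair of pulled-back forms is
universal for pairs consisting of an `m`-form and an `n`-form. -/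
theorem stmt_2 (k : Type) [Field k] [CharZero k] (m n : ℕ)
    (V V' : Type) [AddCommGroup V] [Module k V] [AddCommGroup V'] [Module k V']
    (ω : MultilinearMap k (fun _ : Fin m => V) k)
    (ω' : MultilinearMap k (fun _ : Fin n => V') k)
    (hV : ∀ (W : Type) [AddCommGroup W] [Module k W] [FiniteDimensional k W]
      (η : MultilinearMap k (fun _ : Fin m => W) k),
      ∃ f : W →ₗ[k] V, Function.Injective f ∧
        ∀ x : Fin m → W, ω (fun j => f (x j)) = η x)
    (hV' : ∀ (W : Type) [AddCommGroup W] [Module k W] [FiniteDimensional k W]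
      (η : MultilinearMap k (fun _ : Fin n => W) k),
      ∃ f : W →ₗ[k] V', Function.Injective f ∧
        ∀ x : Fin n → W, ω' (fun j => f (x j)) = η x) :
    ∀ (W : Type) [AddCommGroup W] [Module k W] [FiniteDimensional k W]
      (η₁ : MultilinearMap k (fun _ : Fin m => W) k)
      (η₂ : MultilinearMap k (fun _ : Fin n => W) k),
      ∃ f : W →ₗ[k] (V × V'), Function.Injective f ∧
        (∀ x : Fin m → W, ω (fun j => (f (x j)).1) = η₁ x) ∧
        (∀ x : Fin n → W, ω' (fun j => (f (x j)).2) = η₂ x) := by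
  intro W _ _ _ η₁ η₂
  obtain ⟨f₁, hf₁, h₁⟩ := hV W η₁
  obtain ⟨f₂, hf₂, h₂⟩ := hV' W η₂
  refine ⟨f₁.prod f₂, ?_, fun x => h₁ x, fun x => h₂ x⟩
  intro a b hab
  exact hf₁ (congrArg Prod.fst hab)
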